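/- Let R be a nontrivial finite commutative ring with a non-degenerate additive character χ. Suppose the unitary Cayley graph Γ(R,Rˣ) is connected and its complement graph is also connected. Then Γ(R,Rˣ) is prime if and only if 0 is not an eigenvalue of Γ(R,Rˣ), i.e. if and only if Σ_{u∈Rˣ} χ(r·u) ≠ 0 for every r ∈ R. -/

import Mathlib

/-- The Cayley graph of a subset `S` of an additive group: distinct `x, y` are adjacent
iff `x - y ∈ S` (for a symmetric `S` this coincides with the usual definition). -/
def cayleyGraph {G : Type*} [AddCommGroup G] (S : Set G) : SimpleGraph G :=
  SimpleGraph.fromRel (fun x y => x - y ∈ S)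

/-- A set `X` of vertices of a graph is homogeneous if every vertex outside `X` is
adjacent either to all vertices of `X` or to none of them. -/
def IsHomogeneous {V : Type*} (G : SimpleGraph V) (X : Set V) : Prop :=
  ∀ v ∉ X, (∀ x ∈ X, G.Adj v x) ∨ (∀ x ∈ X, ¬ G.Adj v x)

/-- A graph is prime if it has no nontrivial homogeneous set, i.e. no homogeneous set `X`
with `2 ≤ |X|` and `X` a proper subset of the vertex set. -/
def IsPrimeGraph {V : Type*} (G : SimpleGraph V) : Prop :=
  ¬ ∃ X : Set V, 2 ≤ X.ncard ∧ X ≠ Set.univ ∧ IsHomogeneous G X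

lemma cayley_adj {R : Type*} [CommRing R] {a b : R} :
    (cayleyGraph {x : R | IsUnit x}).Adj a b ↔ a ≠ b ∧ IsUnit (a - b) := by
  simp only [cayleyGraph, SimpleGraph.fromRel_adj, Set.mem_setOf_eq]
  constructor
  · rintro ⟨h, h1 | h1⟩
    · exact ⟨h, h1⟩
    · refine ⟨h, ?_⟩
      have := h1.neg
      rwa [neg_sub] at this
  · rintro ⟨h, h1⟩; exact ⟨h, Or.inl h1⟩

lemma addchar_map_sum {A : Type*} [AddCommMonoid A] {ι : Type*} (χ : AddChar A ℂ)
    (s : Finset ι) (g : ι → A) : χ (∑ i ∈ s, g i) = ∏ i ∈ s, χ (g i) := by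
  classical
  induction s using Finset.induction_on with
  | empty => simp [AddChar.map_zero_eq_one]
  | insert a s h ih => rw [Finset.sum_insert h, Finset.prod_insert h,
      AddChar.map_add_eq_mul, ih]

lemma exists_sq_zero {R : Type*} [CommRing R] {a : R} (h0 : a ≠ 0) (hn : IsNilpotent a) :
    ∃ t : R, t ≠ 0 ∧ t * t = 0 := by
  obtain ⟨n, hn⟩ := hn
  induction n using Nat.strong_induction_on generalizing a with
  | _ n ih =>
    match n, hn with
    | 0, hn => rw [pow_zero] at hn
               exact absurd (by rw [← mul_one a, hn, mul_zero]) h0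
    | 1, hn => simp at hn; exact absurd hn h0
    | (m+2), hn =>
      by_cases h : a * a = 0
      · exact ⟨a, h0, h⟩
      · refine ih (m+1) (by omega) (a := a * a) h ?_
        have : (a * a) ^ (m+1) = a ^ (m+2) * a ^ m := by ring
        rw [this, hn, zero_mul]

lemma sum_units_zero_of_sq {R : Type*} [CommRing R] [Fintype R] [DecidableEq R] [Nontrivial R]
    (χ : AddChar R ℂ) (hnd : ∀ I : Ideal R, (∀ x ∈ I, χ x = 1) → I = ⊥)
    {t : R} (ht0 : t ≠ 0) (ht2 : t * t = 0) :
    ∃ r : R, ∑ u : Rˣ, χ (r * (u : R)) = 0 := by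
  classical
  have hspan : Ideal.span {t} ≠ ⊥ := by
    simpa [Ideal.span_singleton_eq_bot] using ht0
  have hex : ∃ x ∈ Ideal.span {t}, χ x ≠ 1 := by
    by_contra h
    push_neg at h
    exact hspan (hnd _ h)
  obtain ⟨x, hx, hχx⟩ := hex
  obtain ⟨c, hc⟩ := Ideal.mem_span_singleton'.mp hx
  have hct : χ (c * t) ≠ 1 := by rwa [hc]
  refine ⟨c, ?_⟩
  set S := ∑ u : Rˣ, χ (c * (u : R)) with hS
  have hu : ∀ (u : Rˣ) (b : R), IsUnit ((u : R) + t * b) := by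
    intro u b
    have hnil : IsNilpotent (t * b) := ⟨2, by
      have h2 : (t * b) ^ 2 = (t * t) * (b * b) := by ring
      rw [h2, ht2, zero_mul]⟩
    have := hnil.isUnit_add_left_of_commute u.isUnit (Commute.all _ _)
    exact this
  have key1 : ∀ b : R, ∑ u : Rˣ, χ (c * ((u : R) + t * b)) = S := by
    intro b
    refine Fintype.sum_equiv
      ⟨fun u => (hu u b).unit, fun u => (hu u (-b)).unit,
        by intro u; apply Units.ext; simp [IsUnit.unit_spec],
        by intro u; apply Units.ext; simp [IsUnit.unit_spec]⟩ _ _ ?_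
    intro u
    simp only [Equiv.coe_fn_mk, IsUnit.unit_spec]
  have key2 : ∑ b : R, ∑ u : Rˣ, χ (c * ((u : R) + t * b)) = S * ∑ b : R, χ ((c * t) * b) := by
    rw [Finset.mul_sum]
    refine Finset.sum_congr rfl ?_
    intro b _
    have : ∀ u : Rˣ, χ (c * ((u : R) + t * b)) = χ (c * (u : R)) * χ ((c * t) * b) := by
      intro u
      rw [← AddChar.map_add_eq_mul]
      congr 1
      ring
    rw [Finset.sum_congr rfl (fun u _ => this u), ← Finset.sum_mul]
  have hψ : (χ.mulShift (c * t)) ≠ 0 := by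
    rw [AddChar.ne_zero_iff]
    exact ⟨1, by simpa using hct⟩
  have hzero : ∑ b : R, χ ((c * t) * b) = 0 := by
    have := AddChar.sum_eq_zero_iff_ne_zero.mpr hψ
    simpa [AddChar.mulShift_apply] using this
  have lhs : ∑ b : R, ∑ u : Rˣ, χ (c * ((u : R) + t * b)) = (Fintype.card R : ℂ) * S := by
    rw [Finset.sum_congr rfl (fun b _ => key1 b), Finset.sum_const, Finset.card_univ,
      nsmul_eq_mul]
  rw [key2, hzero, mul_zero] at lhs
  have hcard : (Fintype.card R : ℂ) ≠ 0 := by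
    exact_mod_cast Fintype.card_ne_zero
  exact (mul_eq_zero.mp lhs.symm).resolve_left hcard

lemma field_char_sum {F : Type*} [Field F] [Fintype F] [DecidableEq F]
    (ψ : AddChar F ℂ) (a : F) :
    ∑ x ∈ Finset.univ.filter (fun x : F => x ≠ 0), ψ (a * x) ≠ 0 := by
  classical
  have hfilter : Finset.univ.filter (fun x : F => x ≠ 0) = Finset.univ.erase 0 := by
    ext x; simp [Finset.mem_erase, and_comm]
  by_cases ha : a = 0
  · subst ha
    simp only [zero_mul, AddChar.map_zero_eq_one, Finset.sum_const, nsmul_eq_mul, mul_one]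
    have : 0 < (Finset.univ.filter (fun x : F => x ≠ 0)).card := by
      rw [Finset.card_pos]
      exact ⟨1, by simp⟩
    have hne : ((Finset.univ.filter (fun x : F => x ≠ 0)).card : ℂ) ≠ 0 := by
      exact_mod_cast Nat.pos_iff_ne_zero.mp this
    exact hne
  · have hre : ∑ x ∈ Finset.univ.filter (fun x : F => x ≠ 0), ψ (a * x)
        = ∑ x ∈ Finset.univ.filter (fun x : F => x ≠ 0), ψ x := by
      refine Finset.sum_nbij' (fun x => a * x) (fun y => a⁻¹ * y) ?_ ?_ ?_ ?_ ?_
      · intro x hx; simp only [Finset.mem_filter, Finset.mem_univ, true_and] at *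
        exact mul_ne_zero ha hx
      · intro y hy; simp only [Finset.mem_filter, Finset.mem_univ, true_and] at *
        exact mul_ne_zero (inv_ne_zero ha) hy
      · intro x _; field_simp
      · intro y _; field_simp
      · intro x _; rfl
    rw [hre, hfilter]
    have hsplit : ∑ x : F, ψ x = ψ 0 + ∑ x ∈ Finset.univ.erase 0, ψ x :=
      (Finset.add_sum_erase _ _ (Finset.mem_univ 0)).symm
    by_cases hψ : ψ = 0
    · subst hψ
      simp only [AddChar.zero_apply, Finset.sum_const, nsmul_eq_mul, mul_one]
      have : 0 < (Finset.univ.erase (0:F)).card := by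
        rw [Finset.card_pos]; exact ⟨1, by simp⟩
      have hne : (((Finset.univ.erase (0:F)).card : ℕ) : ℂ) ≠ 0 := by
        exact_mod_cast Nat.pos_iff_ne_zero.mp this
      exact hne
    · have := AddChar.sum_eq_zero_iff_ne_zero.mpr hψ
      rw [this, AddChar.map_zero_eq_one] at hsplit
      intro h
      rw [h] at hsplit
      simp at hsplit

lemma pi_isUnit_iff {ι : Type*} [Fintype ι] {F : ι → Type*} [∀ i, Field (F i)]
    (x : ∀ i, F i) : IsUnit x ↔ ∀ i, x i ≠ 0 := by
  constructor
  · rintro ⟨u, rfl⟩ i h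
    have : ((u : ∀ i, F i) * ((u⁻¹ : (∀ i, F i)ˣ) : ∀ i, F i)) i = 1 := by
      rw [u.mul_inv]; rfl
    rw [Pi.mul_apply, h, zero_mul] at this
    exact zero_ne_one this
  · intro h
    refine IsUnit.of_mul_eq_one (fun i => (x i)⁻¹) ?_
    funext i
    exact mul_inv_cancel₀ (h i)

lemma pi_char_sum {ι : Type*} [Fintype ι] [DecidableEq ι] {F : ι → Type*}
    [∀ i, Field (F i)] [∀ i, Fintype (F i)] [∀ i, DecidableEq (F i)]
    (ψ : AddChar (∀ i, F i) ℂ) (s : ∀ i, F i) :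
    ∑ u : (∀ i, F i)ˣ, ψ (s * (u : ∀ i, F i)) ≠ 0 := by
  classical
  set T : ∀ i, Finset (F i) := fun i => Finset.univ.filter (fun x : F i => x ≠ 0) with hT
  have hstep : ∑ u : (∀ i, F i)ˣ, ψ (s * (u : ∀ i, F i))
      = ∑ x ∈ Fintype.piFinset T, ψ (s * x) := by
    refine Finset.sum_nbij' (fun u => (u : ∀ i, F i))
      (fun x => if h : ∀ i, x i ≠ 0 then ((pi_isUnit_iff x).mpr h).unit else 1) ?_ ?_ ?_ ?_ ?_
    · intro u _
      rw [Fintype.mem_piFinset]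
      intro i
      simp only [hT, Finset.mem_filter, Finset.mem_univ, true_and]
      exact ((pi_isUnit_iff _).mp u.isUnit) i
    · intro x _; exact Finset.mem_univ _
    · intro u _
      have h : ∀ i, (u : ∀ i, F i) i ≠ 0 := (pi_isUnit_iff _).mp u.isUnit
      apply Units.ext
      rw [dif_pos h, IsUnit.unit_spec]
    · intro x hx
      rw [Fintype.mem_piFinset] at hx
      have h : ∀ i, x i ≠ 0 := by
        intro i; have := hx i; simpa [hT] using this
      rw [dif_pos h, IsUnit.unit_spec]
    · intro u _; rfl
  rw [hstep]
  have hfac : ∀ x ∈ Fintype.piFinset T, ψ (s * x)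
      = ∏ i, (ψ.compAddMonoidHom (AddMonoidHom.single F i)) (s i * x i) := by
    intro x _
    have hsum : s * x = ∑ i, Pi.single i (s i * x i) := by
      have := Finset.univ_sum_single (s * x)
      convert this.symm using 2
      rfl
    rw [hsum, addchar_map_sum]
    rfl
  rw [Finset.sum_congr rfl hfac]
  have hps := Finset.prod_univ_sum T
    (fun i y => (ψ.compAddMonoidHom (AddMonoidHom.single F i)) (s i * y))
  rw [← hps, Finset.prod_ne_zero_iff]
  intro i _
  exact field_char_sum (ψ.compAddMonoidHom (AddMonoidHom.single F i)) (s i)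

def IsHomogeneous' {V : Type*} (G : SimpleGraph V) (X : Set V) : Prop :=
  ∀ v ∉ X, (∀ x ∈ X, G.Adj v x) ∨ (∀ x ∈ X, ¬ G.Adj v x)

lemma bad_map {V W : Type*} {G : SimpleGraph V} {H : SimpleGraph W} (e : G ≃g H)
    {X : Set V} (h2 : 2 ≤ X.ncard) (hne : X ≠ Set.univ) (hhom : IsHomogeneous' G X) :
    2 ≤ (e '' X).ncard ∧ (e '' X) ≠ Set.univ ∧ IsHomogeneous' H (e '' X) := by
  refine ⟨?_, ?_, ?_⟩
  · rwa [Set.ncard_image_of_injective _ (EquivLike.injective e)]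
  · intro h
    apply hne
    have := congrArg (fun Y => (e : V → W) ⁻¹' Y) h
    simpa [Set.preimage_image_eq _ (EquivLike.injective e)] using this
  · intro w hw
    have hv : e.symm w ∉ X := by
      intro h
      exact hw ⟨e.symm w, h, by simp⟩
    rcases hhom (e.symm w) hv with h | h
    · left
      rintro y ⟨x, hx, rfl⟩
      have := h x hx
      have h2 := e.map_adj_iff.mpr this
      simpa using h2
    · right
      rintro y ⟨x, hx, rfl⟩ hadj
      apply h x hx
      have : H.Adj (e (e.symm w)) (e x) := by simpa using hadj
      exact e.map_adj_iff.mp this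

def complIso {V W : Type*} {G : SimpleGraph V} {H : SimpleGraph W} (e : G ≃g H) :
    Gᶜ ≃g Hᶜ :=
  { e.toEquiv with
    map_rel_iff' := by
      intro a b
      simp only [SimpleGraph.compl_adj]
      constructor
      · rintro ⟨h1, h2⟩
        exact ⟨fun h => h1 (by rw [h]), fun h => h2 (e.map_adj_iff.mpr h)⟩
      · rintro ⟨h1, h2⟩
        exact ⟨fun h => h1 (e.toEquiv.injective h), fun h => h2 (e.map_adj_iff.mp h)⟩ }

def ringCayleyIso {R S : Type*} [CommRing R] [CommRing S] (e : R ≃+* S) :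
    cayleyGraph {x : R | IsUnit x} ≃g cayleyGraph {x : S | IsUnit x} :=
  { e.toEquiv with
    map_rel_iff' := by
      intro a b
      simp only [RingEquiv.toEquiv_eq_coe, Equiv.coe_fn_mk, EquivLike.coe_coe]
      rw [cayley_adj, cayley_adj]
      have hu : IsUnit (e a - e b) ↔ IsUnit (a - b) := by
        rw [← map_sub]
        constructor
        · intro h
          have := h.map e.symm.toRingHom
          simpa using this
        · intro h; exact h.map e.toRingHom
      rw [hu]
      simp only [ne_eq, EmbeddingLike.apply_eq_iff_eq] }

def addRightCayleyIso {R : Type*} [CommRing R] (t : R) :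
    cayleyGraph {x : R | IsUnit x} ≃g cayleyGraph {x : R | IsUnit x} :=
  { Equiv.addRight t with
    map_rel_iff' := by
      intro a b
      simp only [Equiv.coe_addRight]
      rw [cayley_adj, cayley_adj]
      constructor
      · rintro ⟨h1, h2⟩
        refine ⟨fun h => h1 (by rw [h]), ?_⟩
        have : a + t - (b + t) = a - b := by ring
        rwa [this] at h2
      · rintro ⟨h1, h2⟩
        refine ⟨fun h => h1 (by simpa using h), ?_⟩
        have : a + t - (b + t) = a - b := by ring
        rwa [this] }

lemma not_prime_of_sq {R : Type*} [CommRing R] [Nontrivial R] {t : R}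
    (ht0 : t ≠ 0) (ht2 : t * t = 0) :
    ∃ X : Set R, 2 ≤ X.ncard ∧ X ≠ Set.univ ∧ IsHomogeneous' (cayleyGraph {x : R | IsUnit x}) X := by
  have hnil : IsNilpotent t := ⟨2, by rw [pow_two, ht2]⟩
  refine ⟨{0, t}, ?_, ?_, ?_⟩
  · rw [Set.ncard_pair (Ne.symm ht0)]
  · intro h
    have h1 : (1 : R) ∈ ({0, t} : Set R) := h ▸ Set.mem_univ 1
    rcases h1 with h1 | h1
    · exact one_ne_zero h1
    · apply one_ne_zero (α := R)
      calc (1 : R) = 1 * 1 := (one_mul 1).symm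
      _ = t * t := by rw [← h1]
      _ = 0 := ht2
  · intro v hv
    have hv0 : v ≠ 0 := fun h => hv (by rw [h]; left; rfl)
    have hvt : v ≠ t := fun h => hv (by rw [h]; right; rfl)
    have hiff : IsUnit (v - t) ↔ IsUnit v := by
      constructor
      · intro h
        have := (hnil.isUnit_add_left_of_commute h (Commute.all _ _))
        have h2 : v - t + t = v := by ring
        rwa [h2] at this
      · intro h
        have hnil' : IsNilpotent (-t) := by
          refine ⟨2, ?_⟩
          have : (-t) ^ 2 = t * t := by ring
          rw [this, ht2]
        have := (hnil'.isUnit_add_left_of_commute h (Commute.all _ _))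
        have h2 : v + -t = v - t := by ring
        rwa [h2] at this
    by_cases hu : IsUnit v
    · left
      rintro x (rfl | rfl)
      · rw [cayley_adj]; exact ⟨hv0, by rwa [sub_zero]⟩
      · rw [cayley_adj]; exact ⟨hvt, hiff.mpr hu⟩
    · right
      rintro x (rfl | rfl) hadj
      · rw [cayley_adj, sub_zero] at hadj; exact hu hadj.2
      · rw [cayley_adj] at hadj; exact hu (hiff.mp hadj.2)

lemma reachable_invariant {V : Type*} {G : SimpleGraph V} (P : V → Prop)
    (h : ∀ a b, G.Adj a b → (P a ↔ P b)) {x y : V} (hr : G.Reachable x y) :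
    P x ↔ P y := by
  obtain ⟨w⟩ := hr
  induction w with
  | nil => rfl
  | cons hadj _ ih => exact (h _ _ hadj).trans ih

lemma eq_of_reachable_no_edges {V : Type*} {G : SimpleGraph V}
    (h : ∀ a b, ¬ G.Adj a b) {x y : V} (hr : G.Reachable x y) : x = y := by
  obtain ⟨w⟩ := hr
  cases w with
  | nil => rfl
  | cons hadj _ => exact absurd hadj (h _ _)

lemma exists_ne_ne {α : Type*} [Fintype α] [DecidableEq α] (h : 3 ≤ Fintype.card α)
    (u v : α) : ∃ x : α, x ≠ u ∧ x ≠ v := by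
  by_contra hc
  push_neg at hc
  have hsub : (Finset.univ : Finset α) ⊆ {u, v} := by
    intro x _
    by_cases hx : x = u
    · simp [hx]
    · simp [hc x hx]
  have h1 := Finset.card_le_card hsub
  have h2 : ({u, v} : Finset α).card ≤ 2 := Finset.card_insert_le _ _ |>.trans (by simp)
  rw [Finset.card_univ] at h1
  omega

lemma card_two_cases {F : Type*} [Fintype F] [DecidableEq F] [Zero F]
    (h : Fintype.card F = 2) {u v : F} (huv : u ≠ v) : u = 0 ↔ v ≠ 0 := by
  constructor
  · rintro rfl hv
    exact huv hv.symm
  · intro hv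
    by_contra hu
    have hsub : ({0, u, v} : Finset F).card = 3 := by
      rw [Finset.card_insert_of_notMem (by simp [Ne.symm hu, Ne.symm hv]),
        Finset.card_insert_of_notMem (by simp [huv]), Finset.card_singleton]
    have := Finset.card_le_univ ({0, u, v} : Finset F)
    rw [hsub, h] at this
    omega

lemma pi_prime {ι : Type*} [Fintype ι] [DecidableEq ι] [Nonempty ι] {F : ι → Type*}
    [∀ i, Field (F i)] [∀ i, Fintype (F i)] [∀ i, DecidableEq (F i)]
    (hconn : (cayleyGraph {x : ∀ i, F i | IsUnit x}).Connected)
    (hanti : ((cayleyGraph {x : ∀ i, F i | IsUnit x})ᶜ).Connected) :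
    ¬ ∃ X : Set (∀ i, F i), 2 ≤ X.ncard ∧ X ≠ Set.univ ∧
      IsHomogeneous' (cayleyGraph {x : ∀ i, F i | IsUnit x}) X := by
  classical
  set S := ∀ i, F i with hSdef
  set G := cayleyGraph {x : S | IsUnit x} with hGdef
  have adj_iff : ∀ a b : S, G.Adj a b ↔ (a ≠ b ∧ ∀ i, a i ≠ b i) := by
    intro a b
    rw [hGdef, cayley_adj, pi_isUnit_iff]
    constructor
    · rintro ⟨h1, h2⟩
      exact ⟨h1, fun i => by have := h2 i; rwa [Pi.sub_apply, sub_ne_zero] at this⟩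
    · rintro ⟨h1, h2⟩
      exact ⟨h1, fun i => by rw [Pi.sub_apply, sub_ne_zero]; exact h2 i⟩
  -- two distinct indices
  have h2idx : ∀ j : ι, ∃ i : ι, i ≠ j := by
    have hex : ∃ i j : ι, i ≠ j := by
      by_contra hc
      push_neg at hc
      have hcomplete : ∀ a b : S, a ≠ b → G.Adj a b := by
        intro a b hab
        rw [adj_iff]
        refine ⟨hab, ?_⟩
        have : ∃ i, a i ≠ b i := by
          by_contra hc2
          push_neg at hc2
          exact hab (funext hc2)
        obtain ⟨i, hi⟩ := this
        intro j
        rwa [hc j i]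
      have hnoedge : ∀ a b : S, ¬ (Gᶜ).Adj a b := by
        intro a b h
        rw [SimpleGraph.compl_adj] at h
        exact h.2 (hcomplete a b h.1)
      have h01 : (0 : S) ≠ 1 := by
        intro h
        have := congrFun h (Classical.arbitrary ι)
        exact zero_ne_one this
      exact h01 (eq_of_reachable_no_edges hnoedge (hanti.preconnected 0 1))
    obtain ⟨i, j, hij⟩ := hex
    intro k
    by_cases h : i = k
    · exact ⟨j, by rw [← h]; exact hij.symm⟩
    · exact ⟨i, h⟩
  -- at most one two-element coordinate
  have hsmall : ∀ i j : ι, i ≠ j → Fintype.card (F i) = 2 → Fintype.card (F j) = 2 → False := by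
    intro i j hij hi hj
    set P : S → Prop := fun x => (x i = 0 ↔ x j = 0) with hP
    have hinv : ∀ a b : S, G.Adj a b → (P a ↔ P b) := by
      intro a b hadj
      rw [adj_iff] at hadj
      have hi' : a i = 0 ↔ ¬ (b i = 0) := card_two_cases hi (hadj.2 i)
      have hj' : a j = 0 ↔ ¬ (b j = 0) := card_two_cases hj (hadj.2 j)
      rw [hP]
      simp only []
      rw [hi', hj', not_iff_not]
    obtain ⟨n, hn⟩ := exists_ne (0 : F i)
    set y : S := Function.update (0 : S) i n with hy
    have hPy : ¬ P y := by
      rw [hP]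
      simp only []
      rw [hy, Function.update_self, Function.update_of_ne (Ne.symm hij)]
      rw [Pi.zero_apply]
      simp [hn]
    have hP0 : P 0 := ⟨fun _ => rfl, fun _ => rfl⟩
    have := reachable_invariant P hinv (hconn.preconnected 0 y)
    exact hPy (this.mp hP0)
  rintro ⟨X, hX2, hXne, hXhom⟩
  obtain ⟨x0, hx0, x1, hx1, hx01⟩ := (Set.one_lt_ncard (Set.toFinite X)).mp (by omega)
  -- translate so that 0 ∈ Y
  obtain ⟨hY2, hYne, hYhom⟩ := bad_map (addRightCayleyIso (-x0)) hX2 hXne hXhom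
  set Y : Set S := (addRightCayleyIso (-x0)) '' X with hYdef
  have h0Y : (0 : S) ∈ Y := ⟨x0, hx0, by simp [addRightCayleyIso]⟩
  have hdY : x1 - x0 ∈ Y := ⟨x1, hx1, by simp [addRightCayleyIso]; ring⟩
  set d := x1 - x0 with hd
  have hd0 : d ≠ 0 := sub_ne_zero_of_ne (Ne.symm hx01)
  -- Step 1 : a unit in Y
  have step1 : ∃ c : S, c ∈ Y ∧ IsUnit c := by
    by_cases hdu : IsUnit d
    · exact ⟨d, hdY, hdu⟩
    · have hdz : ∃ i0, d i0 = 0 := by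
        rw [pi_isUnit_iff] at hdu
        push_neg at hdu
        exact hdu
      obtain ⟨i0, hi0⟩ := hdz
      have hdnz : ∃ i1, d i1 ≠ 0 := by
        by_contra hc
        push_neg at hc
        exact hd0 (funext hc)
      obtain ⟨i1, hi1⟩ := hdnz
      set v : S := fun i => if d i = 0 then 1 else d i with hv
      have hvu : IsUnit v := by
        rw [pi_isUnit_iff]
        intro i
        rw [hv]
        dsimp only
        split
        · exact one_ne_zero
        · assumption
      have hvne : ∀ i, v i ≠ 0 := (pi_isUnit_iff v).mp hvu
      have hvd : v i1 = d i1 := by rw [hv]; simp [hi1]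
      refine ⟨v, ?_, hvu⟩
      by_contra hvY
      rcases hYhom v hvY with h | h
      · have := h d hdY
        rw [adj_iff] at this
        exact (this.2 i1) hvd
      · have hv0 : v ≠ 0 := fun hh => hvne i1 (by rw [hh]; rfl)
        refine h 0 h0Y ?_
        rw [adj_iff]
        exact ⟨hv0, fun i => by rw [Pi.zero_apply]; exact hvne i⟩
  obtain ⟨c, hcY, hcu⟩ := step1
  have hcne : ∀ i, c i ≠ 0 := (pi_isUnit_iff c).mp hcu
  -- Step 2a : updates of c belong to Y
  have hshare : ∀ (j : ι) (w : F j), w ≠ 0 → Function.update c j w ∈ Y := by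
    intro j w hw
    set b := Function.update c j w with hb
    have hbne : ∀ i, b i ≠ 0 := by
      intro i
      rw [hb]
      by_cases h : i = j
      · subst h; rw [Function.update_self]; exact hw
      · rw [Function.update_of_ne h]; exact hcne i
    by_cases hbY : b ∈ Y
    · exact hbY
    obtain ⟨i, hij⟩ := h2idx j
    have hbc : b i = c i := by rw [hb, Function.update_of_ne hij]
    rcases hYhom b hbY with h | h
    · have := h c hcY
      rw [adj_iff] at this
      exact absurd hbc (this.2 i)
    · exfalso
      refine h 0 h0Y ?_
      rw [adj_iff]
      refine ⟨fun hh => hbne i (by rw [hh]; rfl), fun i => by rw [Pi.zero_apply]; exact hbne i⟩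
  -- Step 2b : all units in Y
  have hunits : ∀ u : S, IsUnit u → u ∈ Y := by
    intro u hu
    have hune : ∀ i, u i ≠ 0 := (pi_isUnit_iff u).mp hu
    by_cases huY : u ∈ Y
    · exact huY
    set j := Classical.arbitrary ι with hj
    have hbY := hshare j (u j) (hune j)
    rcases hYhom u huY with h | h
    · exfalso
      have := h _ hbY
      rw [adj_iff] at this
      exact (this.2 j) (Function.update_self j (u j) c).symm
    · exfalso
      refine h 0 h0Y ?_
      rw [adj_iff]
      exact ⟨fun hh => hune j (by rw [hh]; rfl), fun i => by rw [Pi.zero_apply]; exact hune i⟩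
  -- Step 2c : avoiders of c with a zero coordinate are in Y
  have havoid : ∀ y : S, (∃ i, y i = 0) → (∀ i, y i ≠ c i) → y ∈ Y := by
    intro y ⟨i0, hy0⟩ hyc
    by_cases hyY : y ∈ Y
    · exact hyY
    rcases hYhom y hyY with h | h
    · exfalso
      have := h 0 h0Y
      rw [adj_iff] at this
      exact (this.2 i0) (by rw [Pi.zero_apply]; exact hy0)
    · exfalso
      refine h c hcY ?_
      rw [adj_iff]
      exact ⟨fun hh => hyc i0 (by rw [hh]), hyc⟩
  -- Step 3 : all non-units in Y
  have hnon : ∀ z : S, ¬ IsUnit z → z ∈ Y := by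
    intro z hz
    by_cases hzY : z ∈ Y
    · exact hzY
    exfalso
    by_cases hz0 : z = 0
    · exact hzY (hz0 ▸ h0Y)
    have hzz : ∃ j0, z j0 ≠ 0 := by
      by_contra hc
      push_neg at hc
      exact hz0 (funext hc)
    obtain ⟨j0, hj0⟩ := hzz
    have hcard3 : ∀ i : ι, Fintype.card (F i) ≠ 2 → 3 ≤ Fintype.card (F i) := by
      intro i h
      have := Fintype.one_lt_card (α := F i)
      omega
    by_cases hB : ∃ i0, Fintype.card (F i0) = 2 ∧ z i0 ≠ 0
    · obtain ⟨i0, hcard2, hzi0⟩ := hB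
      have hzc : z i0 = c i0 := by
        by_contra hne
        exact hzi0 ((card_two_cases hcard2 hne).mpr (hcne i0))
      have hchoice : ∀ i, ∃ x : F i, x ≠ c i ∧ x ≠ z i ∧ (i = i0 → x = 0) := by
        intro i
        by_cases h : i = i0
        · subst h
          exact ⟨0, Ne.symm (hcne i), Ne.symm hzi0, fun _ => rfl⟩
        · have hc2 : Fintype.card (F i) ≠ 2 := by
            intro hcc
            exact hsmall i i0 h hcc hcard2
          obtain ⟨x, hx1, hx2⟩ := exists_ne_ne (hcard3 i hc2) (c i) (z i)
          exact ⟨x, hx1, hx2, fun hh => absurd hh h⟩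
      choose a ha1 ha2 ha3 using hchoice
      have haY : a ∈ Y := havoid a ⟨i0, ha3 i0 rfl⟩ ha1
      rcases hYhom z hzY with h | h
      · have := h c hcY
        rw [adj_iff] at this
        exact (this.2 i0) hzc
      · refine h a haY ?_
        rw [adj_iff]
        exact ⟨fun hh => (ha2 i0) (by rw [hh]), fun i => fun hh => (ha2 i) hh.symm⟩
    · push_neg at hB
      have hbY := hshare j0 (z j0) hj0
      have hchoice : ∀ i, ∃ x : F i, x ≠ 0 ∧ x ≠ z i := by
        intro i
        by_cases h : z i = 0
        · exact ⟨1, one_ne_zero, by rw [h]; exact one_ne_zero⟩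
        · have hc2 : Fintype.card (F i) ≠ 2 := fun hcc => h (hB i hcc)
          obtain ⟨x, hx1, hx2⟩ := exists_ne_ne (hcard3 i hc2) 0 (z i)
          exact ⟨x, hx1, hx2⟩
      choose a ha1 ha2 using hchoice
      have haY : a ∈ Y := hunits a ((pi_isUnit_iff a).mpr ha1)
      rcases hYhom z hzY with h | h
      · have := h _ hbY
        rw [adj_iff] at this
        exact (this.2 j0) (Function.update_self j0 (z j0) c).symm
      · refine h a haY ?_
        rw [adj_iff]
        exact ⟨fun hh => (ha2 j0) (by rw [hh]), fun i => fun hh => (ha2 i) hh.symm⟩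
  -- conclude
  apply hYne
  rw [Set.eq_univ_iff_forall]
  intro v
  by_cases hv : IsUnit v
  · exact hunits v hv
  · exact hnon v hv

/-- Let `R` be a nontrivial finite commutative ring with a
non-degenerate additive character `χ`. Suppose the unitary Cayley graph `Γ(R,Rˣ)` is
connected and anti-connected. Then `Γ(R,Rˣ)` is prime iff `0` is not an eigenvalue of
`Γ(R,Rˣ)`, i.e. iff `Σ_{u∈Rˣ} χ(r·u) ≠ 0` for every `r ∈ R`. -/
theorem stmt16 {R : Type*} [CommRing R] [Fintype R] [DecidableEq R] [Nontrivial R]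
    (χ : AddChar R ℂ)
    (hnd : ∀ I : Ideal R, (∀ x ∈ I, χ x = 1) → I = ⊥)
    (hconn : (cayleyGraph {x : R | IsUnit x}).Connected)
    (hanti : ((cayleyGraph {x : R | IsUnit x})ᶜ).Connected) :
    IsPrimeGraph (cayleyGraph {x : R | IsUnit x}) ↔
      ∀ r : R, ∑ u : Rˣ, χ (r * (u : R)) ≠ 0 := by
  classical
  have hered : ¬ IsReduced R → (∃ t : R, t ≠ 0 ∧ t * t = 0) := by
    intro h
    rw [isReduced_iff] at h
    push_neg at h
    obtain ⟨a, han, ha0⟩ := h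
    exact exists_sq_zero ha0 han
  have main : IsReduced R → (IsPrimeGraph (cayleyGraph {x : R | IsUnit x}) ∧
      ∀ r : R, ∑ u : Rˣ, χ (r * (u : R)) ≠ 0) := by
    intro hred
    haveI : IsArtinianRing R := isArtinian_of_finite
    haveI : Finite (Ideal R) :=
      Finite.of_injective (fun I : Ideal R => (I : Set R)) (fun _ _ h => SetLike.coe_injective h)
    haveI : Finite {I : Ideal R | I.IsMaximal} := Subtype.finite
    haveI : Fintype {I : Ideal R | I.IsMaximal} := Fintype.ofFinite _
    haveI : DecidableEq {I : Ideal R | I.IsMaximal} := Classical.decEq _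
    haveI : Nonempty {I : Ideal R | I.IsMaximal} := by
      obtain ⟨I, hI⟩ := Ideal.exists_maximal R
      exact ⟨⟨I, hI⟩⟩
    letI instF : ∀ i : {I : Ideal R | I.IsMaximal}, Field (R ⧸ i.1) :=
      fun i => @Ideal.Quotient.field R _ i.1 i.2
    haveI : ∀ i : {I : Ideal R | I.IsMaximal}, Finite (R ⧸ i.1) :=
      fun i => Finite.of_surjective _ Ideal.Quotient.mk_surjective
    letI instFin : ∀ i : {I : Ideal R | I.IsMaximal}, Fintype (R ⧸ i.1) :=
      fun i => Fintype.ofFinite _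
    letI instDec : ∀ i : {I : Ideal R | I.IsMaximal}, DecidableEq (R ⧸ i.1) :=
      fun i => Classical.decEq _
    let e : R ≃+* ∀ i : {I : Ideal R | I.IsMaximal}, R ⧸ i.1 :=
      (IsArtinianRing.equivPi R).toRingEquiv.trans
        (RingEquiv.piCongrLeft (fun i : {I : Ideal R | I.IsMaximal} => R ⧸ i.1) (MaximalSpectrum.equivSubtype R))
    let giso := ringCayleyIso e
    have hconn' : (cayleyGraph {x : ∀ i : {I : Ideal R | I.IsMaximal}, R ⧸ i.1 | IsUnit x}).Connected :=
      (SimpleGraph.Iso.connected_iff giso).mp hconn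
    have hanti' : ((cayleyGraph {x : ∀ i : {I : Ideal R | I.IsMaximal}, R ⧸ i.1 | IsUnit x})ᶜ).Connected :=
      (SimpleGraph.Iso.connected_iff (complIso giso)).mp hanti
    have hpi := pi_prime (F := fun i : {I : Ideal R | I.IsMaximal} => R ⧸ i.1) hconn' hanti'
    constructor
    · rintro ⟨X, h2, hne, hhom⟩
      exact hpi ⟨giso '' X, bad_map giso h2 hne hhom⟩
    · intro r
      have hsum_eq : ∑ u : Rˣ, χ (r * (u : R))
          = ∑ u : (∀ i : {I : Ideal R | I.IsMaximal}, R ⧸ i.1)ˣ,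
            (χ.compAddMonoidHom (AddMonoidHom.mk' (fun s => e.symm s)
              (by intro a b; simp))) ((e r) * (u : ∀ i : {I : Ideal R | I.IsMaximal}, R ⧸ i.1)) := by
        refine Fintype.sum_equiv (Units.mapEquiv e.toMulEquiv) _ _ ?_
        intro u
        simp only [AddChar.compAddMonoidHom_apply, AddMonoidHom.mk'_apply]
        show χ (r * (u : R)) = χ (e.symm (e r * e (u : R)))
        rw [← map_mul, RingEquiv.symm_apply_apply]
      rw [hsum_eq]
      exact pi_char_sum _ _
  constructor
  · intro hprime r
    have hred : IsReduced R := by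
      by_contra hnr
      obtain ⟨t, ht0, ht2⟩ := hered hnr
      exact hprime (not_prime_of_sq ht0 ht2)
    exact (main hred).2 r
  · intro hsum
    have hred : IsReduced R := by
      by_contra hnr
      obtain ⟨t, ht0, ht2⟩ := hered hnr
      obtain ⟨r, hr⟩ := sum_units_zero_of_sq χ hnd ht0 ht2
      exact hsum r hr
    exact (main hred).1
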